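/- For every integer m ≥ 8, each identification in the construction of G_m glues a vertex v_i of one copy of L_{2m} to a vertex v_j of another copy with |i − j| ≥ 3. Consequently, the edge coloring inherited from the copies of L_{2m} makes G_m a properly 2m-edge-colored graph (no two edges at a common vertex have the same color), and moreover no vertex of G_m is incident to two edges of consecutive colors coming from different copies. -/

import Mathlib

/-- A vertex of the disjoint union of the `4m+2` copies of `L_{2m}`:
`(k, i)` is the vertex `v_i` of the copy `L^k`, with `1 ≤ k ≤ 4m+2` and
`0 ≤ i ≤ 2m`. -/
def VOk (m : ℕ) (p : ℕ × ℕ) : Prop :=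
  1 ≤ p.1 ∧ p.1 ≤ 4 * m + 2 ∧ p.2 ≤ 2 * m

/-- Vertices of the disjoint union of the copies `L¹, …, L^{4m+2}` of `L_{2m}`. -/
def Vm (m : ℕ) := { p : ℕ × ℕ // VOk m p }

/-- The identifications I1–I6 defining `G_m`. -/
def glueRel (m : ℕ) : Vm m → Vm m → Prop := fun x y =>
  (∃ t, 1 ≤ t ∧ t + 1 ≤ m ∧ x.1 = (t, t - 1) ∧ y.1 = (t + 1, t + 2)) ∨
  (∃ t, m + 1 ≤ t ∧ t + 1 ≤ 2 * m ∧ x.1 = (t, t - 2) ∧ y.1 = (t + 1, t + 1)) ∨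
  (x.1 = (1, 2) ∧ y.1 = (2 * m, 2 * m - 2)) ∨
  (∃ t, 1 ≤ t ∧ t ≤ m ∧ x.1 = (t, t) ∧ y.1 = (2 * m + t, 2 * m - 5)) ∨
  (∃ t, m + 1 ≤ t ∧ t ≤ 2 * m ∧ x.1 = (t, t - 1) ∧ y.1 = (2 * m + t, 5)) ∨
  (x.1 = (1, 0) ∧ y.1 = (4 * m + 1, 6)) ∨
  (x.1 = (4 * m + 2, 2 * m - 6) ∧ y.1 = (2 * m, 2 * m))

/-- The vertex set of `G_m`: the quotient of the disjoint union of the copies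
of `L_{2m}` by the identifications I1–I6. -/
def Qm (m : ℕ) := Quot (glueRel m)

/-- Projection to the quotient. -/
def mkQ (m : ℕ) : Vm m → Qm m := Quot.mk (glueRel m)

/-- `x` and `y` are the endpoints of an edge of one of the copies of `L_{2m}`
(`y` is the upper endpoint). -/
def EdgeV (m : ℕ) (x y : Vm m) : Prop :=
  x.1.1 = y.1.1 ∧ x.1.2 + 1 = y.1.2

/-- The graph `G_m`. -/
def Gm (m : ℕ) : SimpleGraph (Qm m) where
  Adj q q' := q ≠ q' ∧
    ∃ x y : Vm m, (EdgeV m x y ∨ EdgeV m y x) ∧ q = mkQ m x ∧ q' = mkQ m y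
  symm := by
    constructor
    rintro q q' ⟨h, x, y, he, hx, hy⟩
    exact ⟨h.symm, y, x, by tauto, hy, hx⟩
  loopless := by constructor; rintro q ⟨h, -⟩; exact h rfl


/-- `x` is incident to an edge of color `c` in its copy of `L_{2m}`:
the edge of color `c` of a copy joins the vertices `v_{c-1}` and `v_c`. -/
def Inc (m : ℕ) (x : Vm m) (c : ℕ) : Prop :=
  (c = x.1.2 ∧ 1 ≤ c) ∨ (c = x.1.2 + 1 ∧ c ≤ 2 * m)

/-- Canonical representative map: each glue-target is sent to the
corresponding glue-source (with the two triple classes sent to a common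
representative); all other vertices are fixed. -/
def fC (m a b : ℕ) : ℕ × ℕ :=
  if 2 ≤ a ∧ a ≤ m ∧ b = a + 1 then (a - 1, a - 2)
  else if m + 2 ≤ a ∧ a ≤ 2 * m ∧ b = a then (a - 1, a - 3)
  else if a = 2 * m ∧ b = 2 * m - 2 then (1, 2)
  else if 2 * m + 1 ≤ a ∧ a ≤ 3 * m ∧ b = 2 * m - 5 then (a - 2 * m, a - 2 * m)
  else if 3 * m + 1 ≤ a ∧ a ≤ 4 * m ∧ b = 5 then (a - 2 * m, a - 2 * m - 1)
  else if a = 4 * m + 1 ∧ b = 6 then (1, 0)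
  else if a = 4 * m + 2 ∧ b = 2 * m - 6 then (2 * m - 1, 2 * m - 3)
  else (a, b)

lemma fC_spec (m a b : ℕ) :
    ((2 ≤ a ∧ a ≤ m ∧ b = a + 1) ∧ (fC m a b).1 = a - 1 ∧ (fC m a b).2 = a - 2) ∨
    ((m + 2 ≤ a ∧ a ≤ 2 * m ∧ b = a) ∧ (fC m a b).1 = a - 1 ∧ (fC m a b).2 = a - 3) ∨
    ((a = 2 * m ∧ b = 2 * m - 2) ∧ (fC m a b).1 = 1 ∧ (fC m a b).2 = 2) ∨
    ((2 * m + 1 ≤ a ∧ a ≤ 3 * m ∧ b = 2 * m - 5) ∧ (fC m a b).1 = a - 2 * m ∧ (fC m a b).2 = a - 2 * m) ∨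
    ((3 * m + 1 ≤ a ∧ a ≤ 4 * m ∧ b = 5) ∧ (fC m a b).1 = a - 2 * m ∧ (fC m a b).2 = a - 2 * m - 1) ∨
    ((a = 4 * m + 1 ∧ b = 6) ∧ (fC m a b).1 = 1 ∧ (fC m a b).2 = 0) ∨
    ((a = 4 * m + 2 ∧ b = 2 * m - 6) ∧ (fC m a b).1 = 2 * m - 1 ∧ (fC m a b).2 = 2 * m - 3) ∨
    ((fC m a b).1 = a ∧ (fC m a b).2 = b) := by
  by_cases h1 : 2 ≤ a ∧ a ≤ m ∧ b = a + 1
  · have hv : fC m a b = (a - 1, a - 2) := by unfold fC; rw [if_pos h1]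
    exact (Or.inl ⟨h1, by rw [hv], by rw [hv]⟩)
  by_cases h2 : m + 2 ≤ a ∧ a ≤ 2 * m ∧ b = a
  · have hv : fC m a b = (a - 1, a - 3) := by unfold fC; rw [if_neg h1, if_pos h2]
    exact Or.inr ((Or.inl ⟨h2, by rw [hv], by rw [hv]⟩))
  by_cases h3 : a = 2 * m ∧ b = 2 * m - 2
  · have hv : fC m a b = (1, 2) := by unfold fC; rw [if_neg h1, if_neg h2, if_pos h3]
    exact Or.inr (Or.inr ((Or.inl ⟨h3, by rw [hv], by rw [hv]⟩)))
  by_cases h4 : 2 * m + 1 ≤ a ∧ a ≤ 3 * m ∧ b = 2 * m - 5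
  · have hv : fC m a b = (a - 2 * m, a - 2 * m) := by unfold fC; rw [if_neg h1, if_neg h2, if_neg h3, if_pos h4]
    exact Or.inr (Or.inr (Or.inr ((Or.inl ⟨h4, by rw [hv], by rw [hv]⟩))))
  by_cases h5 : 3 * m + 1 ≤ a ∧ a ≤ 4 * m ∧ b = 5
  · have hv : fC m a b = (a - 2 * m, a - 2 * m - 1) := by unfold fC; rw [if_neg h1, if_neg h2, if_neg h3, if_neg h4, if_pos h5]
    exact Or.inr (Or.inr (Or.inr (Or.inr ((Or.inl ⟨h5, by rw [hv], by rw [hv]⟩)))))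
  by_cases h6 : a = 4 * m + 1 ∧ b = 6
  · have hv : fC m a b = (1, 0) := by unfold fC; rw [if_neg h1, if_neg h2, if_neg h3, if_neg h4, if_neg h5, if_pos h6]
    exact Or.inr (Or.inr (Or.inr (Or.inr (Or.inr ((Or.inl ⟨h6, by rw [hv], by rw [hv]⟩))))))
  by_cases h7 : a = 4 * m + 2 ∧ b = 2 * m - 6
  · have hv : fC m a b = (2 * m - 1, 2 * m - 3) := by unfold fC; rw [if_neg h1, if_neg h2, if_neg h3, if_neg h4, if_neg h5, if_neg h6, if_pos h7]
    exact Or.inr (Or.inr (Or.inr (Or.inr (Or.inr (Or.inr ((Or.inl ⟨h7, by rw [hv], by rw [hv]⟩)))))))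
  have hv : fC m a b = (a, b) := by unfold fC; rw [if_neg h1, if_neg h2, if_neg h3, if_neg h4, if_neg h5, if_neg h6, if_neg h7]
  exact Or.inr (Or.inr (Or.inr (Or.inr (Or.inr (Or.inr (Or.inr (⟨by rw [hv], by rw [hv]⟩)))))))

lemma fC_glue (m : ℕ) (hm : 8 ≤ m) {x y : Vm m} (h : glueRel m x y) :
    fC m x.1.1 x.1.2 = fC m y.1.1 y.1.2 := by
  rcases h with ⟨t, h1, h2, hx, hy⟩ | ⟨t, h1, h2, hx, hy⟩ | ⟨hx, hy⟩ |
    ⟨t, h1, h2, hx, hy⟩ | ⟨t, h1, h2, hx, hy⟩ | ⟨hx, hy⟩ | ⟨hx, hy⟩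
  · have hx1 : x.1.1 = t := by rw [hx]
    have hx2 : x.1.2 = t - 1 := by rw [hx]
    have hy1 : y.1.1 = t + 1 := by rw [hy]
    have hy2 : y.1.2 = t + 2 := by rw [hy]
    have e1 : fC m (t) (t - 1) = (t, t - 1) := by
      unfold fC; rw [if_neg (show ¬(2 ≤ t ∧ t ≤ m ∧ t - 1 = t + 1) by omega), if_neg (show ¬(m + 2 ≤ t ∧ t ≤ 2 * m ∧ t - 1 = t) by omega), if_neg (show ¬(t = 2 * m ∧ t - 1 = 2 * m - 2) by omega), if_neg (show ¬(2 * m + 1 ≤ t ∧ t ≤ 3 * m ∧ t - 1 = 2 * m - 5) by omega), if_neg (show ¬(3 * m + 1 ≤ t ∧ t ≤ 4 * m ∧ t - 1 = 5) by omega), if_neg (show ¬(t = 4 * m + 1 ∧ t - 1 = 6) by omega), if_neg (show ¬(t = 4 * m + 2 ∧ t - 1 = 2 * m - 6) by omega)]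
    have e2 : fC m (t + 1) (t + 2) = (t + 1 - 1, t + 1 - 2) := by
      unfold fC; rw [if_pos (show 2 ≤ t + 1 ∧ t + 1 ≤ m ∧ t + 2 = t + 1 + 1 by omega)]
    rw [hx1, hx2, hy1, hy2, e1, e2]
    all_goals simp only [Prod.mk.injEq]
    all_goals constructor <;> omega
  · have hx1 : x.1.1 = t := by rw [hx]
    have hx2 : x.1.2 = t - 2 := by rw [hx]
    have hy1 : y.1.1 = t + 1 := by rw [hy]
    have hy2 : y.1.2 = t + 1 := by rw [hy]
    have e1 : fC m (t) (t - 2) = (t, t - 2) := by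
      unfold fC; rw [if_neg (show ¬(2 ≤ t ∧ t ≤ m ∧ t - 2 = t + 1) by omega), if_neg (show ¬(m + 2 ≤ t ∧ t ≤ 2 * m ∧ t - 2 = t) by omega), if_neg (show ¬(t = 2 * m ∧ t - 2 = 2 * m - 2) by omega), if_neg (show ¬(2 * m + 1 ≤ t ∧ t ≤ 3 * m ∧ t - 2 = 2 * m - 5) by omega), if_neg (show ¬(3 * m + 1 ≤ t ∧ t ≤ 4 * m ∧ t - 2 = 5) by omega), if_neg (show ¬(t = 4 * m + 1 ∧ t - 2 = 6) by omega), if_neg (show ¬(t = 4 * m + 2 ∧ t - 2 = 2 * m - 6) by omega)]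
    have e2 : fC m (t + 1) (t + 1) = (t + 1 - 1, t + 1 - 3) := by
      unfold fC; rw [if_neg (show ¬(2 ≤ t + 1 ∧ t + 1 ≤ m ∧ t + 1 = t + 1 + 1) by omega), if_pos (show m + 2 ≤ t + 1 ∧ t + 1 ≤ 2 * m ∧ t + 1 = t + 1 by omega)]
    rw [hx1, hx2, hy1, hy2, e1, e2]
    all_goals simp only [Prod.mk.injEq]
    all_goals constructor <;> omega
  · have hx1 : x.1.1 = 1 := by rw [hx]
    have hx2 : x.1.2 = 2 := by rw [hx]
    have hy1 : y.1.1 = 2 * m := by rw [hy]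
    have hy2 : y.1.2 = 2 * m - 2 := by rw [hy]
    have e1 : fC m (1) (2) = (1, 2) := by
      unfold fC; rw [if_neg (show ¬(2 ≤ 1 ∧ 1 ≤ m ∧ 2 = 1 + 1) by omega), if_neg (show ¬(m + 2 ≤ 1 ∧ 1 ≤ 2 * m ∧ 2 = 1) by omega), if_neg (show ¬(1 = 2 * m ∧ 2 = 2 * m - 2) by omega), if_neg (show ¬(2 * m + 1 ≤ 1 ∧ 1 ≤ 3 * m ∧ 2 = 2 * m - 5) by omega), if_neg (show ¬(3 * m + 1 ≤ 1 ∧ 1 ≤ 4 * m ∧ 2 = 5) by omega), if_neg (show ¬(1 = 4 * m + 1 ∧ 2 = 6) by omega), if_neg (show ¬(1 = 4 * m + 2 ∧ 2 = 2 * m - 6) by omega)]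
    have e2 : fC m (2 * m) (2 * m - 2) = (1, 2) := by
      unfold fC; rw [if_neg (show ¬(2 ≤ 2 * m ∧ 2 * m ≤ m ∧ 2 * m - 2 = 2 * m + 1) by omega), if_neg (show ¬(m + 2 ≤ 2 * m ∧ 2 * m ≤ 2 * m ∧ 2 * m - 2 = 2 * m) by omega), if_pos (show 2 * m = 2 * m ∧ 2 * m - 2 = 2 * m - 2 by omega)]
    rw [hx1, hx2, hy1, hy2, e1, e2]
    all_goals simp only [Prod.mk.injEq]
    all_goals constructor <;> omega
  · have hx1 : x.1.1 = t := by rw [hx]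
    have hx2 : x.1.2 = t := by rw [hx]
    have hy1 : y.1.1 = 2 * m + t := by rw [hy]
    have hy2 : y.1.2 = 2 * m - 5 := by rw [hy]
    have e1 : fC m (t) (t) = (t, t) := by
      unfold fC; rw [if_neg (show ¬(2 ≤ t ∧ t ≤ m ∧ t = t + 1) by omega), if_neg (show ¬(m + 2 ≤ t ∧ t ≤ 2 * m ∧ t = t) by omega), if_neg (show ¬(t = 2 * m ∧ t = 2 * m - 2) by omega), if_neg (show ¬(2 * m + 1 ≤ t ∧ t ≤ 3 * m ∧ t = 2 * m - 5) by omega), if_neg (show ¬(3 * m + 1 ≤ t ∧ t ≤ 4 * m ∧ t = 5) by omega), if_neg (show ¬(t = 4 * m + 1 ∧ t = 6) by omega), if_neg (show ¬(t = 4 * m + 2 ∧ t = 2 * m - 6) by omega)]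
    have e2 : fC m (2 * m + t) (2 * m - 5) = (2 * m + t - 2 * m, 2 * m + t - 2 * m) := by
      unfold fC; rw [if_neg (show ¬(2 ≤ 2 * m + t ∧ 2 * m + t ≤ m ∧ 2 * m - 5 = 2 * m + t + 1) by omega), if_neg (show ¬(m + 2 ≤ 2 * m + t ∧ 2 * m + t ≤ 2 * m ∧ 2 * m - 5 = 2 * m + t) by omega), if_neg (show ¬(2 * m + t = 2 * m ∧ 2 * m - 5 = 2 * m - 2) by omega), if_pos (show 2 * m + 1 ≤ 2 * m + t ∧ 2 * m + t ≤ 3 * m ∧ 2 * m - 5 = 2 * m - 5 by omega)]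
    rw [hx1, hx2, hy1, hy2, e1, e2]
    all_goals simp only [Prod.mk.injEq]
    all_goals constructor <;> omega
  · have hx1 : x.1.1 = t := by rw [hx]
    have hx2 : x.1.2 = t - 1 := by rw [hx]
    have hy1 : y.1.1 = 2 * m + t := by rw [hy]
    have hy2 : y.1.2 = 5 := by rw [hy]
    have e1 : fC m (t) (t - 1) = (t, t - 1) := by
      unfold fC; rw [if_neg (show ¬(2 ≤ t ∧ t ≤ m ∧ t - 1 = t + 1) by omega), if_neg (show ¬(m + 2 ≤ t ∧ t ≤ 2 * m ∧ t - 1 = t) by omega), if_neg (show ¬(t = 2 * m ∧ t - 1 = 2 * m - 2) by omega), if_neg (show ¬(2 * m + 1 ≤ t ∧ t ≤ 3 * m ∧ t - 1 = 2 * m - 5) by omega), if_neg (show ¬(3 * m + 1 ≤ t ∧ t ≤ 4 * m ∧ t - 1 = 5) by omega), if_neg (show ¬(t = 4 * m + 1 ∧ t - 1 = 6) by omega), if_neg (show ¬(t = 4 * m + 2 ∧ t - 1 = 2 * m - 6) by omega)]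
    have e2 : fC m (2 * m + t) (5) = (2 * m + t - 2 * m, 2 * m + t - 2 * m - 1) := by
      unfold fC; rw [if_neg (show ¬(2 ≤ 2 * m + t ∧ 2 * m + t ≤ m ∧ 5 = 2 * m + t + 1) by omega), if_neg (show ¬(m + 2 ≤ 2 * m + t ∧ 2 * m + t ≤ 2 * m ∧ 5 = 2 * m + t) by omega), if_neg (show ¬(2 * m + t = 2 * m ∧ 5 = 2 * m - 2) by omega), if_neg (show ¬(2 * m + 1 ≤ 2 * m + t ∧ 2 * m + t ≤ 3 * m ∧ 5 = 2 * m - 5) by omega), if_pos (show 3 * m + 1 ≤ 2 * m + t ∧ 2 * m + t ≤ 4 * m ∧ 5 = 5 by omega)]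
    rw [hx1, hx2, hy1, hy2, e1, e2]
    all_goals simp only [Prod.mk.injEq]
    all_goals constructor <;> omega
  · have hx1 : x.1.1 = 1 := by rw [hx]
    have hx2 : x.1.2 = 0 := by rw [hx]
    have hy1 : y.1.1 = 4 * m + 1 := by rw [hy]
    have hy2 : y.1.2 = 6 := by rw [hy]
    have e1 : fC m (1) (0) = (1, 0) := by
      unfold fC; rw [if_neg (show ¬(2 ≤ 1 ∧ 1 ≤ m ∧ 0 = 1 + 1) by omega), if_neg (show ¬(m + 2 ≤ 1 ∧ 1 ≤ 2 * m ∧ 0 = 1) by omega), if_neg (show ¬(1 = 2 * m ∧ 0 = 2 * m - 2) by omega), if_neg (show ¬(2 * m + 1 ≤ 1 ∧ 1 ≤ 3 * m ∧ 0 = 2 * m - 5) by omega), if_neg (show ¬(3 * m + 1 ≤ 1 ∧ 1 ≤ 4 * m ∧ 0 = 5) by omega), if_neg (show ¬(1 = 4 * m + 1 ∧ 0 = 6) by omega), if_neg (show ¬(1 = 4 * m + 2 ∧ 0 = 2 * m - 6) by omega)]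
    have e2 : fC m (4 * m + 1) (6) = (1, 0) := by
      unfold fC; rw [if_neg (show ¬(2 ≤ 4 * m + 1 ∧ 4 * m + 1 ≤ m ∧ 6 = 4 * m + 1 + 1) by omega), if_neg (show ¬(m + 2 ≤ 4 * m + 1 ∧ 4 * m + 1 ≤ 2 * m ∧ 6 = 4 * m + 1) by omega), if_neg (show ¬(4 * m + 1 = 2 * m ∧ 6 = 2 * m - 2) by omega), if_neg (show ¬(2 * m + 1 ≤ 4 * m + 1 ∧ 4 * m + 1 ≤ 3 * m ∧ 6 = 2 * m - 5) by omega), if_neg (show ¬(3 * m + 1 ≤ 4 * m + 1 ∧ 4 * m + 1 ≤ 4 * m ∧ 6 = 5) by omega), if_pos (show 4 * m + 1 = 4 * m + 1 ∧ 6 = 6 by omega)]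
    rw [hx1, hx2, hy1, hy2, e1, e2]
    all_goals simp only [Prod.mk.injEq]
    all_goals constructor <;> omega
  · have hx1 : x.1.1 = 4 * m + 2 := by rw [hx]
    have hx2 : x.1.2 = 2 * m - 6 := by rw [hx]
    have hy1 : y.1.1 = 2 * m := by rw [hy]
    have hy2 : y.1.2 = 2 * m := by rw [hy]
    have e1 : fC m (4 * m + 2) (2 * m - 6) = (2 * m - 1, 2 * m - 3) := by
      unfold fC; rw [if_neg (show ¬(2 ≤ 4 * m + 2 ∧ 4 * m + 2 ≤ m ∧ 2 * m - 6 = 4 * m + 2 + 1) by omega), if_neg (show ¬(m + 2 ≤ 4 * m + 2 ∧ 4 * m + 2 ≤ 2 * m ∧ 2 * m - 6 = 4 * m + 2) by omega), if_neg (show ¬(4 * m + 2 = 2 * m ∧ 2 * m - 6 = 2 * m - 2) by omega), if_neg (show ¬(2 * m + 1 ≤ 4 * m + 2 ∧ 4 * m + 2 ≤ 3 * m ∧ 2 * m - 6 = 2 * m - 5) by omega), if_neg (show ¬(3 * m + 1 ≤ 4 * m + 2 ∧ 4 * m + 2 ≤ 4 * m ∧ 2 * m - 6 = 5) by omega), if_neg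 (show ¬(4 * m + 2 = 4 * m + 1 ∧ 2 * m - 6 = 6) by omega), if_pos (show 4 * m + 2 = 4 * m + 2 ∧ 2 * m - 6 = 2 * m - 6 by omega)]
    have e2 : fC m (2 * m) (2 * m) = (2 * m - 1, 2 * m - 3) := by
      unfold fC; rw [if_neg (show ¬(2 ≤ 2 * m ∧ 2 * m ≤ m ∧ 2 * m = 2 * m + 1) by omega), if_pos (show m + 2 ≤ 2 * m ∧ 2 * m ≤ 2 * m ∧ 2 * m = 2 * m by omega)]
    rw [hx1, hx2, hy1, hy2, e1, e2]
    all_goals simp only [Prod.mk.injEq]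
    all_goals constructor <;> omega

lemma fC_inj (m : ℕ) (hm : 8 ≤ m) (a b c d : ℕ)
    (h : fC m a b = fC m c d) :
    (a = c ∧ b = d) ∨ (b + 3 ≤ d ∨ d + 3 ≤ b) := by
  have s1 := fC_spec m a b
  have s2 := fC_spec m c d
  rw [Prod.ext_iff] at h
  generalize hP : fC m a b = p at s1 h
  generalize hQ : fC m c d = q at s2 h
  omega

lemma fC_quot (m : ℕ) (hm : 8 ≤ m) {x y : Vm m} (h : mkQ m x = mkQ m y) :
    fC m x.1.1 x.1.2 = fC m y.1.1 y.1.2 :=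
  congrArg (Quot.lift (fun z : Vm m => fC m z.1.1 z.1.2)
    (fun _ _ hab => fC_glue m hm hab)) h

/-- for `m ≥ 8`, (a) each identification I1–I6 glues a vertex
`v_i` of one copy to a vertex `v_j` of another copy with `|i − j| ≥ 3`;
(b) consequently the coloring inherited from the copies of `L_{2m}` is proper:
at any vertex of `G_m`, two incident edges with the same color coincide (in
particular lie in the same copy); and (c) no vertex of `G_m` is incident to
two edges of consecutive colors coming from different copies. -/
theorem statement10 (m : ℕ) (hm : 8 ≤ m) :
    (∀ x y : Vm m, glueRel m x y →
      x.1.2 + 3 ≤ y.1.2 ∨ y.1.2 + 3 ≤ x.1.2) ∧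
    (∀ (x y : Vm m) (c : ℕ), mkQ m x = mkQ m y →
      Inc m x c → Inc m y c → x.1.1 = y.1.1) ∧
    (∀ (x y : Vm m) (c : ℕ), mkQ m x = mkQ m y →
      Inc m x c → Inc m y (c + 1) → x.1.1 = y.1.1) := by
  refine ⟨?_, ?_, ?_⟩
  · intro x y h
    rcases h with ⟨t, h1, h2, hx, hy⟩ | ⟨t, h1, h2, hx, hy⟩ | ⟨hx, hy⟩ |
      ⟨t, h1, h2, hx, hy⟩ | ⟨t, h1, h2, hx, hy⟩ | ⟨hx, hy⟩ | ⟨hx, hy⟩ <;>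
    · have hx2 : x.1.2 = _ := congrArg Prod.snd hx
      have hy2 : y.1.2 = _ := congrArg Prod.snd hy
      simp only [] at hx2 hy2
      omega
  · intro x y c hq hx hy
    have h2 := fC_quot m hm hq
    have h3 := fC_inj m hm _ _ _ _ h2
    simp only [Inc] at hx hy
    omega
  · intro x y c hq hx hy
    have h2 := fC_quot m hm hq
    have h3 := fC_inj m hm _ _ _ _ h2
    simp only [Inc] at hx hy
    omega
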